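/- arXiv:1907.09522 — 4 statements merged into one kernel-verified Lean document; each statement's English description precedes it below -/
import Mathlib

section
/- Let Q1 ∈ ℝ^{p×k1} and B1 ∈ ℝ^{p×(p−k1)} be such that the p×p matrix (Q1, B1) is orthogonal, and let Q2 ∈ ℝ^{p×k2} satisfy Q2ᵀQ2 = I_{k2}. If D(Q1,Q2) ≥ d for some d ≥ 0, then ‖B1ᵀQ2‖₂² ≥ τ d², where τ = min(k1/k2, k2/k1) and ‖·‖₂ denotes the matrix spectral norm (largest singular value). -/
open Matrix

/-- Spectral norm (largest singular value) of a real matrix, defined as the operator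
norm of the induced linear map between Euclidean spaces. -/
noncomputable def spec {m n : ℕ} (A : Matrix (Fin m) (Fin n) ℝ) : ℝ :=
  ‖LinearMap.toContinuousLinearMap (Matrix.toEuclideanLin A)‖

lemma frob_nonneg {a b : ℕ} (M : Matrix (Fin a) (Fin b) ℝ) : 0 ≤ (Mᵀ * M).trace := by
  rw [Matrix.trace]
  refine Finset.sum_nonneg fun j _ => ?_
  simp only [Matrix.diag_apply, Matrix.mul_apply, Matrix.transpose_apply]
  exact Finset.sum_nonneg fun i _ => mul_self_nonneg _

lemma col_sq_le {a b : ℕ} (M : Matrix (Fin a) (Fin b) ℝ) (j : Fin b) :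
    ∑ i, M i j ^ 2 ≤ spec M ^ 2 := by
  set T := LinearMap.toContinuousLinearMap (Matrix.toEuclideanLin M)
  have h1 : ‖T (EuclideanSpace.single j 1)‖ ≤ spec M := by
    have := T.le_opNorm (EuclideanSpace.single j 1)
    simp [EuclideanSpace.norm_single] at this
    exact this
  have h2 : ‖T (EuclideanSpace.single j 1)‖ ^ 2 = ∑ i, M i j ^ 2 := by
    rw [EuclideanSpace.norm_eq, Real.sq_sqrt (by positivity)]
    refine Finset.sum_congr rfl fun i _ => ?_
    have : T (EuclideanSpace.single j 1) i = M i j := by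
      show (Matrix.toEuclideanLin M) (EuclideanSpace.single j 1) i = M i j
      rw [Matrix.toEuclideanLin_apply]
      simp [Matrix.mulVec, dotProduct]
    rw [this]
    simp
  calc ∑ i, M i j ^ 2 = _ := h2.symm
    _ ≤ spec M ^ 2 := pow_le_pow_left₀ (norm_nonneg _) h1 2

lemma frob_le {a b : ℕ} (M : Matrix (Fin a) (Fin b) ℝ) :
    (Mᵀ * M).trace ≤ (b : ℝ) * spec M ^ 2 := by
  have : (Mᵀ * M).trace = ∑ j, ∑ i, M i j ^ 2 := by
    rw [Matrix.trace]
    refine Finset.sum_congr rfl fun j _ => ?_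
    simp [Matrix.mul_apply, sq]
  rw [this]
  calc ∑ j : Fin b, ∑ i, M i j ^ 2 ≤ ∑ j : Fin b, spec M ^ 2 :=
        Finset.sum_le_sum fun j _ => col_sq_le M j
    _ = (b : ℝ) * spec M ^ 2 := by simp [mul_comm]

/-- If `(Q1, B1)` is a `p × p` orthogonal matrix, `Q2ᵀQ2 = I`, and
`D(Q1,Q2) ≥ d` with `d ≥ 0`, then `‖B1ᵀ Q2‖₂² ≥ τ d²` where
`τ = min(k1/k2, k2/k1)`. -/
theorem stmt4 {p k1 k2 : ℕ} (hk1 : 0 < k1) (hk2 : 0 < k2) (hk1p : k1 ≤ p)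
    (Q1 : Matrix (Fin p) (Fin k1) ℝ) (B1 : Matrix (Fin p) (Fin (p - k1)) ℝ)
    (Q2 : Matrix (Fin p) (Fin k2) ℝ)
    (hQ1 : Q1ᵀ * Q1 = 1) (hB1 : B1ᵀ * B1 = 1) (hQB : Q1ᵀ * B1 = 0)
    (hQ2 : Q2ᵀ * Q2 = 1)
    (d : ℝ) (hd : 0 ≤ d)
    (hD : d ≤ Real.sqrt (1 - (Q1 * Q1ᵀ * (Q2 * Q2ᵀ)).trace / (min k1 k2 : ℕ))) :
    min ((k1 : ℝ) / k2) ((k2 : ℝ) / k1) * d ^ 2 ≤ spec (B1ᵀ * Q2) ^ 2 := by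
  have hK1 : (0:ℝ) < (k1:ℝ) := by exact_mod_cast hk1
  have hK2 : (0:ℝ) < (k2:ℝ) := by exact_mod_cast hk2
  set t : ℝ := (Q1 * Q1ᵀ * (Q2 * Q2ᵀ)).trace with ht_def
  -- completeness: Q1*Q1ᵀ + B1*B1ᵀ = 1
  have hBQ : B1ᵀ * Q1 = 0 := by
    have := congrArg Matrix.transpose hQB
    simpa using this
  have hUtU : fromRows Q1ᵀ B1ᵀ * fromCols Q1 B1 = 1 := by
    rw [fromRows_mul_fromCols, hQ1, hB1, hQB, hBQ, fromBlocks_one]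
  have hUUt : Q1 * Q1ᵀ + B1 * B1ᵀ = 1 := by
    have h2 : fromCols Q1 B1 * fromRows Q1ᵀ B1ᵀ = 1 :=
      (Matrix.mul_eq_one_comm_of_equiv
        (((finCongr (by omega : p = k1 + (p - k1))).trans finSumFinEquiv.symm).symm)).mp hUtU
    rwa [fromCols_mul_fromRows] at h2
  have hBB : B1 * B1ᵀ = 1 - Q1 * Q1ᵀ := by rw [← hUUt]; abel
  have hP2 : (Q2 * Q2ᵀ) * (Q2 * Q2ᵀ) = Q2 * Q2ᵀ := by
    rw [Matrix.mul_assoc, ← Matrix.mul_assoc Q2ᵀ, hQ2, Matrix.one_mul]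
  -- cyclic form of t
  have h1 : t = ((Q2ᵀ * Q1) * (Q1ᵀ * Q2)).trace := by
    calc (Q1 * Q1ᵀ * (Q2 * Q2ᵀ)).trace
        = ((Q2 * Q2ᵀ) * (Q1 * Q1ᵀ)).trace := Matrix.trace_mul_comm _ _
      _ = (Q2 * (Q2ᵀ * Q1 * Q1ᵀ)).trace := by simp only [Matrix.mul_assoc]
      _ = ((Q2ᵀ * Q1 * Q1ᵀ) * Q2).trace := Matrix.trace_mul_comm _ _
      _ = ((Q2ᵀ * Q1) * (Q1ᵀ * Q2)).trace := by simp only [Matrix.mul_assoc]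
  have ht0 : 0 ≤ t := by
    have h := frob_nonneg (Q1ᵀ * Q2)
    rwa [Matrix.transpose_mul, Matrix.transpose_transpose, ← h1] at h
  -- Frobenius of B1ᵀ Q2 equals k2 - t
  have hF : ((B1ᵀ * Q2)ᵀ * (B1ᵀ * Q2)).trace = (k2 : ℝ) - t := by
    have hm : (B1ᵀ * Q2)ᵀ * (B1ᵀ * Q2) = 1 - (Q2ᵀ * Q1) * (Q1ᵀ * Q2) := by
      rw [Matrix.transpose_mul, Matrix.transpose_transpose]
      calc Q2ᵀ * B1 * (B1ᵀ * Q2) = Q2ᵀ * (B1 * B1ᵀ) * Q2 := by simp only [Matrix.mul_assoc]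
        _ = Q2ᵀ * (1 - Q1 * Q1ᵀ) * Q2 := by rw [hBB]
        _ = Q2ᵀ * Q2 - (Q2ᵀ * Q1) * (Q1ᵀ * Q2) := by
            rw [Matrix.mul_sub, Matrix.sub_mul, Matrix.mul_one]
            simp only [Matrix.mul_assoc]
        _ = 1 - (Q2ᵀ * Q1) * (Q1ᵀ * Q2) := by rw [hQ2]
    rw [hm, Matrix.trace_sub, Matrix.trace_one, ← h1]
    simp
  have ht2 : t ≤ (k2 : ℝ) := by
    have h := frob_nonneg (B1ᵀ * Q2)
    rw [hF] at h; linarith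
  -- t ≤ k1
  have ht1k : t ≤ (k1 : ℝ) := by
    have hPt : (1 - Q2 * Q2ᵀ)ᵀ = 1 - Q2 * Q2ᵀ := by
      rw [Matrix.transpose_sub, Matrix.transpose_one, Matrix.transpose_mul,
        Matrix.transpose_transpose]
    have h1P : (1 - Q2 * Q2ᵀ) * (1 - Q2 * Q2ᵀ) = 1 - Q2 * Q2ᵀ := by
      rw [Matrix.sub_mul, Matrix.mul_sub, Matrix.mul_sub, Matrix.one_mul, Matrix.one_mul,
        Matrix.mul_one, hP2]
      abel
    have hYm : ((1 - Q2 * Q2ᵀ) * Q1)ᵀ * ((1 - Q2 * Q2ᵀ) * Q1)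
        = 1 - (Q1ᵀ * Q2) * (Q2ᵀ * Q1) := by
      rw [Matrix.transpose_mul, hPt]
      calc Q1ᵀ * (1 - Q2 * Q2ᵀ) * ((1 - Q2 * Q2ᵀ) * Q1)
          = Q1ᵀ * ((1 - Q2 * Q2ᵀ) * (1 - Q2 * Q2ᵀ)) * Q1 := by simp only [Matrix.mul_assoc]
        _ = Q1ᵀ * (1 - Q2 * Q2ᵀ) * Q1 := by rw [h1P]
        _ = Q1ᵀ * Q1 - (Q1ᵀ * Q2) * (Q2ᵀ * Q1) := by
            rw [Matrix.mul_sub, Matrix.sub_mul, Matrix.mul_one]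
            simp only [Matrix.mul_assoc]
        _ = 1 - (Q1ᵀ * Q2) * (Q2ᵀ * Q1) := by rw [hQ1]
    have h := frob_nonneg ((1 - Q2 * Q2ᵀ) * Q1)
    rw [hYm, Matrix.trace_sub, Matrix.trace_one] at h
    have h2 : ((Q1ᵀ * Q2) * (Q2ᵀ * Q1)).trace = t := by
      rw [Matrix.trace_mul_comm, ← h1]
    rw [h2] at h
    simp only [Fintype.card_fin] at h
    linarith
  -- numeric part
  have hmR : (0:ℝ) < ((min k1 k2 : ℕ) : ℝ) := by
    have : 0 < min k1 k2 := lt_min hk1 hk2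
    exact_mod_cast this
  have htm : t ≤ ((min k1 k2 : ℕ) : ℝ) := by
    rcases le_total k1 k2 with h | h
    · rw [min_eq_left h]; exact ht1k
    · rw [min_eq_right h]; exact ht2
  have harg : 0 ≤ 1 - t / ((min k1 k2 : ℕ) : ℝ) := by
    rw [sub_nonneg, div_le_one hmR]; exact htm
  have hd2 : d ^ 2 ≤ 1 - t / ((min k1 k2 : ℕ) : ℝ) := by
    have h := pow_le_pow_left₀ hd hD 2
    rwa [Real.sq_sqrt harg] at h
  have hd2K : d ^ 2 * ((min k1 k2 : ℕ) : ℝ) ≤ ((min k1 k2 : ℕ) : ℝ) - t := by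
    have h := mul_le_mul_of_nonneg_right hd2 hmR.le
    rwa [sub_mul, one_mul, div_mul_cancel₀ _ (ne_of_gt hmR)] at h
  have hspec : (k2 : ℝ) - t ≤ spec (B1ᵀ * Q2) ^ 2 * k2 := by
    have h := frob_le (B1ᵀ * Q2)
    rw [hF] at h; linarith [h]
  rcases le_total k1 k2 with h | h
  · have hK12 : (k1:ℝ) ≤ (k2:ℝ) := by exact_mod_cast h
    have hmin : min ((k1 : ℝ) / k2) ((k2 : ℝ) / k1) = (k1 : ℝ) / k2 := by
      apply min_eq_left
      rw [div_le_div_iff₀ hK2 hK1]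
      exact mul_le_mul hK12 hK12 hK1.le hK2.le
    rw [hmin, div_mul_eq_mul_div, div_le_iff₀ hK2]
    have hmm : ((min k1 k2 : ℕ) : ℝ) = (k1:ℝ) := by rw [min_eq_left h]
    rw [hmm] at hd2K
    linarith [hd2K, hspec, hK12]
  · have hK21 : (k2:ℝ) ≤ (k1:ℝ) := by exact_mod_cast h
    have hmin : min ((k1 : ℝ) / k2) ((k2 : ℝ) / k1) = (k2 : ℝ) / k1 := by
      apply min_eq_right
      rw [div_le_div_iff₀ hK1 hK2]
      exact mul_le_mul hK21 hK21 hK2.le hK1.le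
    rw [hmin, div_mul_eq_mul_div, div_le_iff₀ hK1]
    have hmm : ((min k1 k2 : ℕ) : ℝ) = (k2:ℝ) := by rw [min_eq_right h]
    rw [hmm] at hd2K
    have hds : d ^ 2 ≤ spec (B1ᵀ * Q2) ^ 2 := by
      have : d ^ 2 * (k2:ℝ) ≤ spec (B1ᵀ * Q2) ^ 2 * (k2:ℝ) := by linarith
      exact le_of_mul_le_mul_right this hK2
    have h5 : (k2:ℝ) * d ^ 2 ≤ (k2:ℝ) * spec (B1ᵀ * Q2) ^ 2 :=
      mul_le_mul_of_nonneg_left hds hK2.le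
    have h6 : (k2:ℝ) * spec (B1ᵀ * Q2) ^ 2 ≤ (k1:ℝ) * spec (B1ᵀ * Q2) ^ 2 :=
      mul_le_mul_of_nonneg_right hK21 (sq_nonneg _)
    linarith
end

section
/- Let Q1 ∈ ℝ^{p×k1} and B1 ∈ ℝ^{p×(p−k1)} be such that the p×p matrix (Q1, B1) is orthogonal, let Q2 ∈ ℝ^{p×k2} satisfy Q2ᵀQ2 = I_{k2}, and suppose D(Q1,Q2) ≥ d for some d ≥ 0. Let A2 ∈ ℝ^{p×k2} have the same column space as Q2 and satisfy ‖A2 v‖₂ ≥ a2 · p^{(1−δ2)/2} · ‖v‖₂ for all v ∈ ℝ^{k2}, where a2 > 0 and δ2 ∈ [0,1]. Then ‖B1ᵀ A2‖₂² ≥ a2² d² τ p^{1−δ2}, where τ = min(k1/k2, k2/k1). -/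
open Matrix

/-- Euclidean norm of a vector. -/
noncomputable def vnorm {n : ℕ} (v : Fin n → ℝ) : ℝ :=
  Real.sqrt (∑ i, v i ^ 2)

lemma vnorm_nonneg {n : ℕ} (v : Fin n → ℝ) : 0 ≤ vnorm v := Real.sqrt_nonneg _

lemma vnorm_sq {n : ℕ} (v : Fin n → ℝ) : vnorm v ^ 2 = ∑ i, v i ^ 2 :=
  Real.sq_sqrt (Finset.sum_nonneg fun _ _ => sq_nonneg _)

lemma vnorm_eq_norm {n : ℕ} (v : Fin n → ℝ) :
    vnorm v = ‖(WithLp.equiv 2 (Fin n → ℝ)).symm v‖ := by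
  rw [EuclideanSpace.norm_eq]
  simp [vnorm, Real.norm_eq_abs, sq_abs]

lemma vnorm_mulVec_le {m n : ℕ} (A : Matrix (Fin m) (Fin n) ℝ) (v : Fin n → ℝ) :
    vnorm (A.mulVec v) ≤ spec A * vnorm v := by
  rw [vnorm_eq_norm, vnorm_eq_norm]
  have h := (LinearMap.toContinuousLinearMap (Matrix.toEuclideanLin A)).le_opNorm
    ((WithLp.equiv 2 (Fin n → ℝ)).symm v)
  simpa [spec, Matrix.toEuclideanLin_apply_piLp_toLp] using h

lemma spec_nonneg {m n : ℕ} (A : Matrix (Fin m) (Fin n) ℝ) : 0 ≤ spec A := norm_nonneg _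

lemma vnorm_sq_transpose_mulVec {p k n : ℕ} (M : Matrix (Fin p) (Fin k) ℝ)
    (N : Matrix (Fin p) (Fin n) ℝ) (i : Fin n) :
    vnorm (Mᵀ.mulVec (Nᵀ i)) ^ 2 = (Nᵀ * (M * Mᵀ) * N) i i := by
  have hassoc : Nᵀ * (M * Mᵀ) * N = (Nᵀ * M) * (Mᵀ * N) := by
    simp only [Matrix.mul_assoc]
  rw [vnorm_sq, hassoc]
  simp only [mul_apply, transpose_apply, mulVec, dotProduct]
  refine Finset.sum_congr rfl fun j _ => ?_
  rw [sq]
  congr 1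
  exact Finset.sum_congr rfl fun r _ => mul_comm _ _


set_option maxHeartbeats 1000000 in
/-- If `(Q1, B1)` is a `p × p` orthogonal matrix, `Q2ᵀQ2 = I`,
`D(Q1,Q2) ≥ d` with `d ≥ 0`, and `A2` has the same column space as `Q2` with
`‖A2 v‖₂ ≥ a2 p^{(1−δ2)/2} ‖v‖₂` for all `v`, then
`‖B1ᵀ A2‖₂² ≥ a2² d² τ p^{1−δ2}` where `τ = min(k1/k2, k2/k1)`. -/
theorem stmt5 {p k1 k2 : ℕ} (hp : 0 < p) (hk1 : 0 < k1) (hk2 : 0 < k2) (hk1p : k1 ≤ p)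
    (Q1 : Matrix (Fin p) (Fin k1) ℝ) (B1 : Matrix (Fin p) (Fin (p - k1)) ℝ)
    (Q2 : Matrix (Fin p) (Fin k2) ℝ) (A2 : Matrix (Fin p) (Fin k2) ℝ)
    (hQ1 : Q1ᵀ * Q1 = 1) (hB1 : B1ᵀ * B1 = 1) (hQB : Q1ᵀ * B1 = 0)
    (hQ2 : Q2ᵀ * Q2 = 1)
    (d : ℝ) (hd : 0 ≤ d)
    (hD : d ≤ Real.sqrt (1 - (Q1 * Q1ᵀ * (Q2 * Q2ᵀ)).trace / (min k1 k2 : ℕ)))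
    (a2 δ2 : ℝ) (ha2 : 0 < a2) (hδ2 : δ2 ∈ Set.Icc (0:ℝ) 1)
    (hcol : LinearMap.range A2.mulVecLin = LinearMap.range Q2.mulVecLin)
    (hA2min : ∀ v : Fin k2 → ℝ, a2 * (p : ℝ) ^ ((1 - δ2) / 2) * vnorm v ≤ vnorm (A2.mulVec v)) :
    a2 ^ 2 * d ^ 2 * min ((k1 : ℝ) / k2) ((k2 : ℝ) / k1) * (p : ℝ) ^ (1 - δ2)
      ≤ spec (B1ᵀ * A2) ^ 2 := by
  set τ : ℝ := min ((k1 : ℝ) / k2) ((k2 : ℝ) / k1) with hτdef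
  by_cases hd0 : d = 0
  · have : a2 ^ 2 * d ^ 2 * τ * (p : ℝ) ^ (1 - δ2) = 0 := by rw [hd0]; ring
    rw [this]; exact sq_nonneg _
  have hdpos : 0 < d := lt_of_le_of_ne hd (Ne.symm hd0)
  -- cast positivity
  have hK1 : (0:ℝ) < k1 := by exact_mod_cast hk1
  have hK2 : (0:ℝ) < k2 := by exact_mod_cast hk2
  set m : ℝ := ((min k1 k2 : ℕ) : ℝ) with hmdef
  have hm : m = min (k1:ℝ) (k2:ℝ) := by simp [hmdef, Nat.cast_min]
  have hmpos : 0 < m := by rw [hm]; exact lt_min hK1 hK2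
  have hmK2 : m ≤ (k2:ℝ) := by rw [hm]; exact min_le_right _ _
  -- from hD : d^2 ≤ 1 - tr/m
  have hsqrtnn : (0:ℝ) ≤ 1 - (Q1 * Q1ᵀ * (Q2 * Q2ᵀ)).trace / m := by
    by_contra h
    push_neg at h
    rw [Real.sqrt_eq_zero_of_nonpos h.le] at hD
    linarith
  have hd2 : d ^ 2 ≤ 1 - (Q1 * Q1ᵀ * (Q2 * Q2ᵀ)).trace / m := by
    have := pow_le_pow_left₀ hd hD 2
    rwa [Real.sq_sqrt hsqrtnn] at this
  have htrle : (Q1 * Q1ᵀ * (Q2 * Q2ᵀ)).trace ≤ (1 - d ^ 2) * m := by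
    have h1 : (Q1 * Q1ᵀ * (Q2 * Q2ᵀ)).trace / m ≤ 1 - d ^ 2 := by linarith
    calc (Q1 * Q1ᵀ * (Q2 * Q2ᵀ)).trace
        = (Q1 * Q1ᵀ * (Q2 * Q2ᵀ)).trace / m * m := by field_simp
      _ ≤ (1 - d ^ 2) * m := by
          exact mul_le_mul_of_nonneg_right h1 hmpos.le
  -- orthogonal completion: Q1*Q1ᵀ + B1*B1ᵀ = 1
  have hB1Q : B1ᵀ * Q1 = 0 := by
    have := congrArg Matrix.transpose hQB
    simpa using this
  have h1 : fromRows Q1ᵀ B1ᵀ * fromCols Q1 B1 = 1 := by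
    rw [fromRows_mul_fromCols, hQ1, hB1, hQB, hB1Q, ← Matrix.fromBlocks_one]
  have e : Fin p ≃ Fin k1 ⊕ Fin (p - k1) :=
    (finCongr (Nat.add_sub_cancel' hk1p).symm).trans finSumFinEquiv.symm
  have h2 : fromCols Q1 B1 * fromRows Q1ᵀ B1ᵀ = 1 :=
    (fromCols_mul_fromRows_eq_one_comm e Q1 B1 Q1ᵀ B1ᵀ).mpr h1
  have hsum : Q1 * Q1ᵀ + B1 * B1ᵀ = 1 := by
    rw [← fromCols_mul_fromRows]; exact h2
  -- diagonal of G
  set G : Matrix (Fin k2) (Fin k2) ℝ := Q2ᵀ * (Q1 * Q1ᵀ) * Q2 with hGdef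
  have htr : (Q1 * Q1ᵀ * (Q2 * Q2ᵀ)).trace = ∑ i, G i i := by
    have : Q1 * Q1ᵀ * (Q2 * Q2ᵀ) = (Q1 * Q1ᵀ * Q2) * Q2ᵀ := by
      simp only [Matrix.mul_assoc]
    rw [this, Matrix.trace_mul_comm]
    have : Q2ᵀ * (Q1 * Q1ᵀ * Q2) = G := by rw [hGdef]; simp only [Matrix.mul_assoc]
    rw [this, Matrix.trace]
    rfl
  have hGi : ∀ i, G i i = vnorm (Q1ᵀ.mulVec (Q2ᵀ i)) ^ 2 := fun i =>
    (vnorm_sq_transpose_mulVec Q1 Q2 i).symm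
  have hGnn : ∀ i, 0 ≤ G i i := fun i => (hGi i) ▸ sq_nonneg _
  -- pick minimizing index
  obtain ⟨i0, -, hi0⟩ := Finset.exists_min_image Finset.univ (fun i => G i i)
    (Finset.univ_nonempty_iff.mpr ⟨⟨0, hk2⟩⟩)
  set g : ℝ := G i0 i0 with hgdef
  have hgnn : 0 ≤ g := hGnn i0
  have hk2g : (k2 : ℝ) * g ≤ ∑ i, G i i := by
    calc (k2:ℝ) * g = ∑ _i : Fin k2, g := by simp [mul_comm]
      _ ≤ ∑ i, G i i := Finset.sum_le_sum fun i _ => hi0 i (Finset.mem_univ i)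
  have hgle : (k2:ℝ) * g ≤ (1 - d ^ 2) * m := by
    rw [← htr] at hk2g; linarith
  -- τ * k2 ≤ m
  have hτK2 : τ * (k2:ℝ) ≤ m := by
    rw [hm]
    rcases le_total (k1:ℝ) (k2:ℝ) with h | h
    · have : τ ≤ (k1:ℝ)/(k2:ℝ) := min_le_left _ _
      calc τ * (k2:ℝ) ≤ (k1:ℝ)/(k2:ℝ) * k2 := mul_le_mul_of_nonneg_right this hK2.le
        _ = min (k1:ℝ) k2 := by rw [min_eq_left h]; field_simp
    · have hτ1 : τ ≤ (k2:ℝ)/(k1:ℝ) := min_le_right _ _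
      have : (k2:ℝ)/(k1:ℝ) ≤ 1 := by rw [div_le_one hK1]; exact h
      calc τ * (k2:ℝ) ≤ 1 * k2 := mul_le_mul_of_nonneg_right (hτ1.trans this) hK2.le
        _ = min (k1:ℝ) k2 := by rw [min_eq_right h]; ring
  have hτnn : 0 ≤ τ := le_min (by positivity) (by positivity)
  -- key : d^2 * τ ≤ 1 - g
  have hkey : d ^ 2 * τ ≤ 1 - g := by
    have h3 : d ^ 2 * (τ * (k2:ℝ)) ≤ d ^ 2 * m :=
      mul_le_mul_of_nonneg_left hτK2 (sq_nonneg d)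
    have h4 : (k2:ℝ) * (d ^ 2 * τ) ≤ (k2:ℝ) * (1 - g) := by nlinarith
    exact le_of_mul_le_mul_left h4 hK2
  -- the witness vector
  set x : Fin p → ℝ := Q2ᵀ i0 with hxdef
  have hxmem : x ∈ LinearMap.range A2.mulVecLin := by
    rw [hcol]
    exact ⟨Pi.single i0 1, by rw [Matrix.mulVecLin_apply, Matrix.mulVec_single_one]; rfl⟩
  obtain ⟨v, hv⟩ := hxmem
  rw [Matrix.mulVecLin_apply] at hv
  have hx1 : vnorm x ^ 2 = 1 := by
    rw [vnorm_sq]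
    have : (1:ℝ) = (Q2ᵀ * Q2) i0 i0 := by rw [hQ2, Matrix.one_apply_eq]
    rw [this]
    simp only [mul_apply, transpose_apply, sq, hxdef]
  have hxv1 : vnorm x = 1 := by
    nlinarith [vnorm_nonneg x]
  set c : ℝ := a2 * (p:ℝ) ^ ((1 - δ2)/2) with hcdef
  have hcpos : 0 < c := by
    have hpp : (0:ℝ) < (p:ℝ) ^ ((1 - δ2)/2) :=
      Real.rpow_pos_of_pos (by exact_mod_cast hp) _
    exact mul_pos ha2 hpp
  have hc2 : c ^ 2 = a2 ^ 2 * (p:ℝ) ^ (1 - δ2) := by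
    rw [hcdef, mul_pow, ← Real.rpow_natCast ((p:ℝ) ^ ((1 - δ2)/2)) 2,
      ← Real.rpow_mul (by positivity)]
    norm_num
  have hcv : c * vnorm v ≤ 1 := by
    have := hA2min v
    rw [hv, hxv1] at this
    exact this
  -- Pythagoras for x
  have hBx : vnorm (B1ᵀ.mulVec x) ^ 2 = 1 - g := by
    have h5 : vnorm (B1ᵀ.mulVec x) ^ 2 = (Q2ᵀ * (B1 * B1ᵀ) * Q2) i0 i0 :=
      vnorm_sq_transpose_mulVec B1 Q2 i0
    have h6 : G + Q2ᵀ * (B1 * B1ᵀ) * Q2 = 1 := by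
      rw [hGdef]
      have : Q2ᵀ * (Q1 * Q1ᵀ) * Q2 + Q2ᵀ * (B1 * B1ᵀ) * Q2
          = Q2ᵀ * (Q1 * Q1ᵀ + B1 * B1ᵀ) * Q2 := by
        rw [Matrix.mul_add, Matrix.add_mul]
      rw [this, hsum, Matrix.mul_one, hQ2]
    have h7 : (Q2ᵀ * (B1 * B1ᵀ) * Q2) i0 i0 = 1 - g := by
      have := congrFun (congrFun (congrArg (fun M => M) h6) i0) i0
      have h8 : G i0 i0 + (Q2ᵀ * (B1 * B1ᵀ) * Q2) i0 i0 = (1 : Matrix (Fin k2) (Fin k2) ℝ) i0 i0 := by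
        rw [← h6]; rfl
      rw [Matrix.one_apply_eq] at h8
      linarith [h8]
    rw [h5, h7]
  -- spectral bound
  have hspec : vnorm (B1ᵀ.mulVec x) ≤ spec (B1ᵀ * A2) * vnorm v := by
    have : (B1ᵀ * A2).mulVec v = B1ᵀ.mulVec x := by
      rw [← Matrix.mulVec_mulVec, hv]
    rw [← this]
    exact vnorm_mulVec_le _ _
  -- conclude
  have hBnn : 0 ≤ vnorm (B1ᵀ.mulVec x) := vnorm_nonneg _
  have hspnn : 0 ≤ spec (B1ᵀ * A2) := spec_nonneg _
  have hvnn : 0 ≤ vnorm v := vnorm_nonneg _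
  have hsq : vnorm (B1ᵀ.mulVec x) ^ 2 ≤ spec (B1ᵀ * A2) ^ 2 * vnorm v ^ 2 := by
    have := pow_le_pow_left₀ hBnn hspec 2
    rwa [mul_pow] at this
  have h9 : d ^ 2 * τ ≤ spec (B1ᵀ * A2) ^ 2 * vnorm v ^ 2 := by
    rw [hBx] at hsq; linarith
  have h10 : (c * vnorm v) ^ 2 ≤ 1 := by
    have h0 : 0 ≤ c * vnorm v := mul_nonneg hcpos.le hvnn
    nlinarith
  calc a2 ^ 2 * d ^ 2 * τ * (p:ℝ) ^ (1 - δ2)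
      = c ^ 2 * (d ^ 2 * τ) := by rw [hc2]; ring
    _ ≤ c ^ 2 * (spec (B1ᵀ * A2) ^ 2 * vnorm v ^ 2) :=
        mul_le_mul_of_nonneg_left h9 (sq_nonneg c)
    _ = spec (B1ᵀ * A2) ^ 2 * (c * vnorm v) ^ 2 := by ring
    _ ≤ spec (B1ᵀ * A2) ^ 2 * 1 :=
        mul_le_mul_of_nonneg_left h10 (sq_nonneg _)
    _ = spec (B1ᵀ * A2) ^ 2 := mul_one _
end

section
/- In the change-point factor model with white-noise orthogonality, let B_i ∈ ℝ^{p×(p−k_i)} have orthonormal columns and satisfy B_iᵀ A_i = 0 (i = 1,2). Then for every integer h ≥ 1: B1ᵀ Σ_{y,1}(h,γ) = 0 whenever ⌊γn⌋ ≤ r0, and B2ᵀ Σ_{y,2}(h,γ) = 0 whenever ⌊γn⌋ ≥ r0. Consequently, with M_i(γ) = Σ_{h=1}^{h0} Σ_{y,i}(h,γ) Σ_{y,i}(h,γ)ᵀ and G(γ) = ‖B1ᵀ M_1(γ) B1‖₂ + ‖B2ᵀ M_2(γ) B2‖₂, one has G(γ0) = 0. -/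
open Matrix MeasureTheory Finset

/-- Entrywise expectation of the outer product `E[u vᵀ]`. -/
noncomputable def outerE {Ω : Type} [MeasurableSpace Ω] (μ : Measure Ω) {a b : ℕ}
    (u : Ω → Fin a → ℝ) (v : Ω → Fin b → ℝ) : Matrix (Fin a) (Fin b) ℝ :=
  Matrix.of fun i j => ∫ ω, u ω i * v ω j ∂μ

/-- `Σ_{y,1}(h,γ) = (1/n)·Σ_{t=1}^{r−h} E[y_t y_{t+h}ᵀ]` where `r = ⌊γn⌋`. -/
noncomputable def SigY1 {Ω : Type} [MeasurableSpace Ω] (μ : Measure Ω) {p : ℕ}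
    (y : ℕ → Ω → Fin p → ℝ) (n h r : ℕ) : Matrix (Fin p) (Fin p) ℝ :=
  (n : ℝ)⁻¹ • ∑ t ∈ Finset.Icc 1 (r - h), outerE μ (y t) (y (t + h))

/-- `Σ_{y,2}(h,γ) = (1/n)·Σ_{t=r+1}^{n−h} E[y_t y_{t+h}ᵀ]` where `r = ⌊γn⌋`. -/
noncomputable def SigY2 {Ω : Type} [MeasurableSpace Ω] (μ : Measure Ω) {p : ℕ}
    (y : ℕ → Ω → Fin p → ℝ) (n h r : ℕ) : Matrix (Fin p) (Fin p) ℝ :=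
  (n : ℝ)⁻¹ • ∑ t ∈ Finset.Icc (r + 1) (n - h), outerE μ (y t) (y (t + h))

section Aux

variable {Ω : Type} [MeasurableSpace Ω] {μ : Measure Ω}

lemma int_mul {f g : Ω → ℝ} (hf : MemLp f 2 μ) (hg : MemLp g 2 μ) :
    Integrable (fun ω => f ω * g ω) μ := by
  have h := hg.smul (r := 1) hf (hpqr := ⟨by norm_num [ENNReal.inv_two_add_inv_two]⟩)
  rw [← memLp_one_iff_integrable]
  simpa [Pi.smul_apply, smul_eq_mul, Pi.mul_def] using h

lemma outerE_transpose {a b : ℕ} (u : Ω → Fin a → ℝ) (v : Ω → Fin b → ℝ) :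
    (outerE μ u v)ᵀ = outerE μ v u := by
  ext i j; simp [outerE, mul_comm]

lemma outerE_left {a k b : ℕ} (A : Matrix (Fin a) (Fin k) ℝ)
    (x : Ω → Fin k → ℝ) (ep : Ω → Fin a → ℝ) (v : Ω → Fin b → ℝ)
    (hxv : ∀ l j, Integrable (fun ω => x ω l * v ω j) μ)
    (hev : ∀ i j, Integrable (fun ω => ep ω i * v ω j) μ) :
    outerE μ (fun ω => A.mulVec (x ω) + ep ω) v
      = A * outerE μ x v + outerE μ ep v := by
  ext i j
  have h1 : (fun ω => (A.mulVec (x ω) + ep ω) i * v ω j)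
      = fun ω => (∑ l, A i l * (x ω l * v ω j)) + ep ω i * v ω j := by
    funext ω
    simp [Matrix.mulVec, dotProduct, add_mul, Finset.sum_mul, mul_assoc]
  have hsum : Integrable (fun ω => ∑ l, A i l * (x ω l * v ω j)) μ :=
    integrable_finset_sum _ (fun l _ => (hxv l j).const_mul _)
  simp only [outerE, Matrix.of_apply, Matrix.add_apply, Matrix.mul_apply]
  rw [h1, integral_add hsum (hev i j), integral_finset_sum _ (fun l _ => (hxv l j).const_mul _)]
  congr 1
  exact Finset.sum_congr rfl fun l _ => MeasureTheory.integral_const_mul _ _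

lemma outerE_right {a k b : ℕ} (A : Matrix (Fin b) (Fin k) ℝ)
    (x : Ω → Fin k → ℝ) (ep : Ω → Fin b → ℝ) (u : Ω → Fin a → ℝ)
    (hxu : ∀ l i, Integrable (fun ω => u ω i * x ω l) μ)
    (heu : ∀ j i, Integrable (fun ω => u ω i * ep ω j) μ) :
    outerE μ u (fun ω => A.mulVec (x ω) + ep ω)
      = outerE μ u x * Aᵀ + outerE μ u ep := by
  have := outerE_left (μ := μ) A x ep u
    (fun l j => by simpa [mul_comm] using hxu l j)
    (fun i j => by simpa [mul_comm] using heu i j)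
  have h2 := congrArg Matrix.transpose this
  rw [outerE_transpose] at h2
  rw [h2]
  rw [Matrix.transpose_add, Matrix.transpose_mul, outerE_transpose, outerE_transpose]

lemma memℒp_model {p k : ℕ} (A : Matrix (Fin p) (Fin k) ℝ) (x : Ω → Fin k → ℝ)
    (ep : Ω → Fin p → ℝ) (hx : ∀ j, MemLp (fun ω => x ω j) 2 μ)
    (he : ∀ i, MemLp (fun ω => ep ω i) 2 μ) (i : Fin p) :
    MemLp (fun ω => (A.mulVec (x ω) + ep ω) i) 2 μ := by
  have hrw : (fun ω => (A.mulVec (x ω) + ep ω) i)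
      = fun ω => (∑ l, A i l * x ω l) + ep ω i := by
    funext ω; simp [Matrix.mulVec, dotProduct]
  rw [hrw]
  have hs : MemLp (∑ l, fun ω => A i l * x ω l) 2 μ :=
    memLp_finset_sum' _ (fun l _ => (hx l).const_mul _)
  have := hs.add (he i)
  convert this using 1
  funext ω
  simp

lemma key {p k q : ℕ} (A : Matrix (Fin p) (Fin k) ℝ) (B : Matrix (Fin p) (Fin q) ℝ)
    (hBA : Bᵀ * A = 0) (xs xt : Ω → Fin k → ℝ) (es et : Ω → Fin p → ℝ)
    (hL2xs : ∀ j, MemLp (fun ω => xs ω j) 2 μ) (hL2xt : ∀ j, MemLp (fun ω => xt ω j) 2 μ)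
    (hL2es : ∀ i, MemLp (fun ω => es ω i) 2 μ) (hL2et : ∀ i, MemLp (fun ω => et ω i) 2 μ)
    (hee : outerE μ es et = 0) (hxte : outerE μ xt es = 0) :
    Bᵀ * outerE μ (fun ω => A.mulVec (xs ω) + es ω) (fun ω => A.mulVec (xt ω) + et ω) = 0 := by
  have hyt : ∀ i, MemLp (fun ω => (A.mulVec (xt ω) + et ω) i) 2 μ :=
    memℒp_model A xt et hL2xt hL2et
  rw [outerE_left A xs es _ (fun l j => int_mul (hL2xs l) (hyt j))
    (fun i j => int_mul (hL2es i) (hyt j))]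
  have h2 : outerE μ es (fun ω => A.mulVec (xt ω) + et ω) = 0 := by
    rw [outerE_right A xt et es (fun l i => int_mul (hL2es i) (hL2xt l))
      (fun j i => int_mul (hL2es i) (hL2et j))]
    have : outerE μ es xt = 0 := by
      rw [← outerE_transpose, hxte, Matrix.transpose_zero]
    rw [this, hee, Matrix.zero_mul, add_zero]
  rw [h2, Matrix.mul_add, ← Matrix.mul_assoc, hBA, Matrix.zero_mul, Matrix.mul_zero, add_zero]

end Aux

/-- In the change-point factor model with white-noise orthogonality,
if `B_i` has orthonormal columns and `B_iᵀ A_i = 0`, then `B1ᵀ Σ_{y,1}(h,γ) = 0`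
whenever `⌊γn⌋ ≤ r0`, `B2ᵀ Σ_{y,2}(h,γ) = 0` whenever `⌊γn⌋ ≥ r0`, and consequently
`G(γ0) = ‖B1ᵀ M_1(γ0) B1‖₂ + ‖B2ᵀ M_2(γ0) B2‖₂ = 0` (at `γ0`, `⌊γ0 n⌋ = r0`). -/
theorem stmt8 {Ω : Type} [MeasurableSpace Ω] (μ : Measure Ω) [IsProbabilityMeasure μ]
    {p k1 k2 n r0 : ℕ} (hn : 0 < n) (hr0 : 1 ≤ r0) (hr0n : r0 ≤ n)
    (A1 : Matrix (Fin p) (Fin k1) ℝ) (A2 : Matrix (Fin p) (Fin k2) ℝ)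
    (x1 : ℕ → Ω → Fin k1 → ℝ) (x2 : ℕ → Ω → Fin k2 → ℝ)
    (e : ℕ → Ω → Fin p → ℝ) (y : ℕ → Ω → Fin p → ℝ)
    (hL2x1 : ∀ t j, MemLp (fun ω => x1 t ω j) 2 μ)
    (hL2x2 : ∀ t j, MemLp (fun ω => x2 t ω j) 2 μ)
    (hL2e : ∀ t i, MemLp (fun ω => e t ω i) 2 μ)
    (hmodel1 : ∀ t, 1 ≤ t → t ≤ r0 → ∀ ω, y t ω = A1.mulVec (x1 t ω) + e t ω)
    (hmodel2 : ∀ t, r0 < t → t ≤ n → ∀ ω, y t ω = A2.mulVec (x2 t ω) + e t ω)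
    (hee : ∀ s t, s ≠ t → outerE μ (e s) (e t) = 0)
    (hx1e : ∀ t s, outerE μ (x1 t) (e s) = 0)
    (hx2e : ∀ t s, outerE μ (x2 t) (e s) = 0)
    (B1 : Matrix (Fin p) (Fin (p - k1)) ℝ) (B2 : Matrix (Fin p) (Fin (p - k2)) ℝ)
    (hB1 : B1ᵀ * B1 = 1) (hB2 : B2ᵀ * B2 = 1)
    (hB1A1 : B1ᵀ * A1 = 0) (hB2A2 : B2ᵀ * A2 = 0)
    (h0 : ℕ) (hh0 : 1 ≤ h0) :
    (∀ h, 1 ≤ h → ∀ γ : ℝ, γ ∈ Set.Ioo (0:ℝ) 1 → ⌊γ * n⌋₊ ≤ r0 →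
      B1ᵀ * SigY1 μ y n h ⌊γ * n⌋₊ = 0) ∧
    (∀ h, 1 ≤ h → ∀ γ : ℝ, γ ∈ Set.Ioo (0:ℝ) 1 → r0 ≤ ⌊γ * n⌋₊ →
      B2ᵀ * SigY2 μ y n h ⌊γ * n⌋₊ = 0) ∧
    spec (B1ᵀ * (∑ h ∈ Finset.Icc 1 h0, SigY1 μ y n h r0 * (SigY1 μ y n h r0)ᵀ) * B1) +
      spec (B2ᵀ * (∑ h ∈ Finset.Icc 1 h0, SigY2 μ y n h r0 * (SigY2 μ y n h r0)ᵀ) * B2)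
      = 0 := by
  have key1 : ∀ h r, 1 ≤ h → r ≤ r0 → B1ᵀ * SigY1 μ y n h r = 0 := by
    intro h r hh hr
    unfold SigY1
    rw [Matrix.mul_smul, Matrix.mul_sum]
    have hz : ∀ t ∈ Finset.Icc 1 (r - h), B1ᵀ * outerE μ (y t) (y (t + h)) = 0 := by
      intro t ht
      rw [Finset.mem_Icc] at ht
      have hyt : y t = fun ω => A1.mulVec (x1 t ω) + e t ω :=
        funext (hmodel1 t ht.1 (by omega))
      have hyth : y (t + h) = fun ω => A1.mulVec (x1 (t + h) ω) + e (t + h) ω :=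
        funext (hmodel1 (t + h) (by omega) (by omega))
      rw [hyt, hyth]
      exact key A1 B1 hB1A1 _ _ _ _ (hL2x1 t) (hL2x1 (t + h)) (hL2e t) (hL2e (t + h))
        (hee t (t + h) (by omega)) (hx1e (t + h) t)
    rw [Finset.sum_congr rfl hz, Finset.sum_const, smul_zero, smul_zero]
  have key2 : ∀ h r, 1 ≤ h → r0 ≤ r → B2ᵀ * SigY2 μ y n h r = 0 := by
    intro h r hh hr
    unfold SigY2
    rw [Matrix.mul_smul, Matrix.mul_sum]
    have hz : ∀ t ∈ Finset.Icc (r + 1) (n - h), B2ᵀ * outerE μ (y t) (y (t + h)) = 0 := by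
      intro t ht
      rw [Finset.mem_Icc] at ht
      have hyt : y t = fun ω => A2.mulVec (x2 t ω) + e t ω :=
        funext (hmodel2 t (by omega) (by omega))
      have hyth : y (t + h) = fun ω => A2.mulVec (x2 (t + h) ω) + e (t + h) ω :=
        funext (hmodel2 (t + h) (by omega) (by omega))
      rw [hyt, hyth]
      exact key A2 B2 hB2A2 _ _ _ _ (hL2x2 t) (hL2x2 (t + h)) (hL2e t) (hL2e (t + h))
        (hee t (t + h) (by omega)) (hx2e (t + h) t)
    rw [Finset.sum_congr rfl hz, Finset.sum_const, smul_zero, smul_zero]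
  refine ⟨fun h hh γ _ hγr => key1 h _ hh hγr, fun h hh γ _ hγr => key2 h _ hh hγr, ?_⟩
  have hM1 : B1ᵀ * (∑ h ∈ Finset.Icc 1 h0, SigY1 μ y n h r0 * (SigY1 μ y n h r0)ᵀ) * B1
      = 0 := by
    rw [Matrix.mul_sum, Matrix.sum_mul]
    refine Finset.sum_eq_zero fun h hh => ?_
    rw [← Matrix.mul_assoc, key1 h r0 (Finset.mem_Icc.mp hh).1 le_rfl, Matrix.zero_mul, Matrix.zero_mul]
  have hM2 : B2ᵀ * (∑ h ∈ Finset.Icc 1 h0, SigY2 μ y n h r0 * (SigY2 μ y n h r0)ᵀ) * B2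
      = 0 := by
    rw [Matrix.mul_sum, Matrix.sum_mul]
    refine Finset.sum_eq_zero fun h hh => ?_
    rw [← Matrix.mul_assoc, key2 h r0 (Finset.mem_Icc.mp hh).1 le_rfl, Matrix.zero_mul, Matrix.zero_mul]
  have hspec0 : ∀ m : ℕ, spec (0 : Matrix (Fin m) (Fin m) ℝ) = 0 := by
    intro m; simp only [spec, map_zero, norm_zero]
  rw [hM1, hM2, hspec0, hspec0, add_zero]
end

section
/- Let A ∈ ℝ^{p×k} have full column rank k ≤ p, let h0 ≥ 1 and Γ_h ∈ ℝ^{k×k} for h = 1,…,h0, and suppose at least one Γ_{h*} is invertible. Define M = Σ_{h=1}^{h0} A ( Γ_h AᵀA Γ_hᵀ ) Aᵀ. Then M is a symmetric positive semidefinite p×p matrix of rank k, its column space equals the column space of A, and every eigenvector of M associated with a nonzero eigenvalue lies in the column space of A. -/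
open Matrix Finset

private lemma sum_mulVec' {m n : Type*} [Fintype m] [Fintype n] {s : Finset ℕ}
    (f : ℕ → Matrix m n ℝ) (v : n → ℝ) :
    (∑ h ∈ s, f h) *ᵥ v = ∑ h ∈ s, f h *ᵥ v := by
  ext i
  simp only [Matrix.mulVec, dotProduct, Matrix.sum_apply, Finset.sum_apply,
    Finset.sum_mul]
  rw [Finset.sum_comm]

private lemma dotProduct_sum' {n : Type*} [Fintype n] {s : Finset ℕ}
    (v : n → ℝ) (f : ℕ → n → ℝ) :
    v ⬝ᵥ (∑ h ∈ s, f h) = ∑ h ∈ s, v ⬝ᵥ f h := by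
  simp only [dotProduct, Finset.sum_apply, Finset.mul_sum]
  rw [Finset.sum_comm]

private lemma dot_self_nonneg' {n : Type*} [Fintype n] (v : n → ℝ) : 0 ≤ v ⬝ᵥ v :=
  Finset.sum_nonneg fun i _ => mul_self_nonneg (v i)

private lemma dot_mulVec' {m n : Type*} [Fintype m] [Fintype n]
    (B : Matrix m n ℝ) (v : m → ℝ) (w : n → ℝ) :
    v ⬝ᵥ (B *ᵥ w) = (Bᵀ *ᵥ v) ⬝ᵥ w := by
  rw [Matrix.dotProduct_mulVec, Matrix.mulVec_transpose]

/-- If `A ∈ ℝ^{p×k}` has full column rank `k ≤ p`, `Γ_h ∈ ℝ^{k×k}` with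
at least one `Γ_{h*}` invertible, and `M = Σ_{h=1}^{h0} A (Γ_h Aᵀ A Γ_hᵀ) Aᵀ`, then `M`
is symmetric positive semidefinite of rank `k`, its column space equals that of `A`,
and every eigenvector of `M` for a nonzero eigenvalue lies in the column space of `A`. -/
theorem stmt12 {p k h0 : ℕ} (hkp : k ≤ p) (hh0 : 1 ≤ h0)
    (A : Matrix (Fin p) (Fin k) ℝ) (hA : A.rank = k)
    (G : ℕ → Matrix (Fin k) (Fin k) ℝ)
    (hinv : ∃ h ∈ Finset.Icc 1 h0, IsUnit (G h)) :
    ∀ M : Matrix (Fin p) (Fin p) ℝ,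
      M = ∑ h ∈ Finset.Icc 1 h0, A * (G h * (Aᵀ * A) * (G h)ᵀ) * Aᵀ →
      (M.IsSymm ∧ M.PosSemidef ∧ M.rank = k ∧
       LinearMap.range M.mulVecLin = LinearMap.range A.mulVecLin ∧
       ∀ (c : ℝ) (v : Fin p → ℝ), c ≠ 0 → M.mulVec v = c • v →
         v ∈ LinearMap.range A.mulVecLin) := by
  obtain ⟨h', hmem, hunit⟩ := hinv
  intro M hM
  -- transpose is conjTranspose over ℝ
  have hct : ∀ {m n : Type} [Fintype m] [Fintype n] (B : Matrix m n ℝ), Bᴴ = Bᵀ := by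
    intro m n _ _ B; ext i j; simp [Matrix.conjTranspose]
  -- key factorization of each summand
  have key : ∀ h : ℕ, A * (G h * (Aᵀ * A) * (G h)ᵀ) * Aᵀ
      = (A * G h * Aᵀ) * (A * G h * Aᵀ)ᵀ := by
    intro h
    simp only [Matrix.transpose_mul, Matrix.transpose_transpose, Matrix.mul_assoc]
  -- positive semidefiniteness
  have hPSD : M.PosSemidef := by
    rw [hM]
    refine Finset.sum_induction _ _ (fun a b ha hb => ha.add hb) Matrix.PosSemidef.zero ?_
    intro h _
    rw [key h, ← hct (A * G h * Aᵀ)]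
    exact Matrix.posSemidef_self_mul_conjTranspose _
  have hSymm : M.IsSymm := by
    have := hPSD.1
    rwa [Matrix.IsHermitian, hct M] at this
  -- A has injective mulVecLin
  have hAinj : Function.Injective A.mulVecLin := by
    rw [← LinearMap.ker_eq_bot]
    have h1 := A.mulVecLin.finrank_range_add_finrank_ker
    rw [Module.finrank_fin_fun] at h1
    have h2 : Module.finrank ℝ (LinearMap.range A.mulVecLin) = k := hA
    have h3 : Module.finrank ℝ (LinearMap.ker A.mulVecLin) = 0 := by omega
    exact Submodule.finrank_eq_zero.mp h3
  -- G h' transpose is invertible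
  have hGTinj : Function.Injective ((G h')ᵀ.mulVec) := by
    rw [Matrix.mulVec_injective_iff_isUnit]
    rw [Matrix.isUnit_iff_isUnit_det, Matrix.det_transpose, ← Matrix.isUnit_iff_isUnit_det]
    exact hunit
  -- kernel of M equals kernel of Aᵀ
  have hker : LinearMap.ker M.mulVecLin = LinearMap.ker Aᵀ.mulVecLin := by
    ext v
    simp only [LinearMap.mem_ker, Matrix.mulVecLin_apply]
    constructor
    · intro hv
      have hzero : (0 : ℝ) = ∑ h ∈ Finset.Icc 1 h0,
          ((A * G h * Aᵀ)ᵀ *ᵥ v) ⬝ᵥ ((A * G h * Aᵀ)ᵀ *ᵥ v) := by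
        have : v ⬝ᵥ (M *ᵥ v) = 0 := by rw [hv, dotProduct_zero]
        rw [← this, hM]
        simp only [key]
        rw [sum_mulVec', dotProduct_sum']
        refine Finset.sum_congr rfl fun h _ => ?_
        rw [← Matrix.mulVec_mulVec, dot_mulVec']
      have hterm : ((A * G h' * Aᵀ)ᵀ *ᵥ v) ⬝ᵥ ((A * G h' * Aᵀ)ᵀ *ᵥ v) = 0 := by
        have := (Finset.sum_eq_zero_iff_of_nonneg
          (fun h _ => dot_self_nonneg' ((A * G h * Aᵀ)ᵀ *ᵥ v))).mp hzero.symm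
        exact this h' hmem
      have hBv : (A * G h' * Aᵀ)ᵀ *ᵥ v = 0 := dotProduct_self_eq_zero.mp hterm
      rw [Matrix.transpose_mul, Matrix.transpose_mul, Matrix.transpose_transpose,
        ← Matrix.mulVec_mulVec, ← Matrix.mulVec_mulVec] at hBv
      have h5 : (G h')ᵀ *ᵥ (Aᵀ *ᵥ v) = 0 := by
        apply hAinj
        simpa [Matrix.mulVecLin_apply] using hBv
      have h6 : Aᵀ *ᵥ v = 0 := by
        apply hGTinj
        simpa using h5
      exact h6
    · intro hv
      rw [hM, sum_mulVec']
      refine Finset.sum_eq_zero fun h _ => ?_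
      rw [← Matrix.mulVec_mulVec, ← Matrix.mulVec_mulVec, hv, Matrix.mulVec_zero,
        Matrix.mulVec_zero]
  -- rank of M is k
  have hrankA : Aᵀ.rank = k := by rw [Matrix.rank_transpose]; exact hA
  have hMrank : M.rank = k := by
    have h1 := M.mulVecLin.finrank_range_add_finrank_ker
    have h2 := Aᵀ.mulVecLin.finrank_range_add_finrank_ker
    rw [Module.finrank_fin_fun] at h1 h2
    rw [hker] at h1
    have : Module.finrank ℝ (LinearMap.range Aᵀ.mulVecLin) = k := hrankA
    unfold Matrix.rank
    omega
  -- range of M is contained in range of A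
  have hle : LinearMap.range M.mulVecLin ≤ LinearMap.range A.mulVecLin := by
    have hMN : M = A * ∑ h ∈ Finset.Icc 1 h0, (G h * (Aᵀ * A) * (G h)ᵀ) * Aᵀ := by
      rw [hM]
      simp only [Matrix.mul_assoc]
      exact (Matrix.mul_sum _ _ _).symm
    rw [hMN, Matrix.mulVecLin_mul]
    exact LinearMap.range_comp_le_range _ _
  have hrange : LinearMap.range M.mulVecLin = LinearMap.range A.mulVecLin := by
    apply Submodule.eq_of_le_of_finrank_eq hle
    show Module.finrank ℝ (LinearMap.range M.mulVecLin)
      = Module.finrank ℝ (LinearMap.range A.mulVecLin)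
    rw [show Module.finrank ℝ (LinearMap.range M.mulVecLin) = M.rank from rfl,
      show Module.finrank ℝ (LinearMap.range A.mulVecLin) = A.rank from rfl, hMrank, hA]
  refine ⟨hSymm, hPSD, hMrank, hrange, ?_⟩
  intro c v hc hv
  rw [← hrange]
  refine ⟨c⁻¹ • v, ?_⟩
  rw [Matrix.mulVecLin_apply, Matrix.mulVec_smul, hv, smul_smul, inv_mul_cancel₀ hc, one_smul]
end
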